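/- Let A be a locally compact Hausdorff pointed space and let f : Z → W be a basepoint-preserving continuous map between locally compact Hausdorff pointed spaces. For any pointed space X, the space X is (id_A ∧ f)-local if and only if the pointed mapping space Map_*(A, X) is f-local, where id_A ∧ f : A ∧ Z → A ∧ W is the map induced by f on smash products. -/

import Mathlib

noncomputable section

namespace DetectMS

/-- A pointed topological space. -/
structure PtdSpace : Type 1 where
  /-- underlying type -/
  carrier : Type
  [inst : TopologicalSpace carrier]
  /-- the basepoint -/
  pt : carrier

attribute [instance] PtdSpace.inst

/-- A basepoint-preserving continuous map of pointed spaces. -/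
structure PtdMap (X Y : PtdSpace) where
  /-- the underlying continuous map -/
  toFun : C(X.carrier, Y.carrier)
  map_pt : toFun X.pt = Y.pt

/-- Post-composition of a generalized loop with a continuous map. -/
def genLoopPush {X Y : Type} [TopologicalSpace X] [TopologicalSpace Y] {N : Type} {x : X}
    (f : C(X, Y)) (p : GenLoop N X x) : GenLoop N Y (f x) :=
  ⟨f.comp p.1, fun y hy => by
    simp only [ContinuousMap.comp_apply]
    rw [p.2 y hy]⟩

/-- A continuous map `f : X → Y` is a weak homotopy equivalence if it induces a bijection on
path components and, for every `n` and every basepoint `x : X`, a bijection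
`πₙ(X, x) → πₙ(Y, f x)` on homotopy groups (expressed here in terms of generalized loops
up to homotopy rel boundary). -/
def IsWeakHomotopyEquiv {X Y : Type} [TopologicalSpace X] [TopologicalSpace Y]
    (f : C(X, Y)) : Prop :=
  (∀ y : Y, ∃ x : X, Joined (f x) y) ∧
  (∀ x x' : X, Joined (f x) (f x') → Joined x x') ∧
  (∀ (n : ℕ) (x : X),
    (∀ q : GenLoop (Fin n) Y (f x), ∃ p : GenLoop (Fin n) X x,
      GenLoop.Homotopic (genLoopPush f p) q) ∧
    (∀ p p' : GenLoop (Fin n) X x,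
      GenLoop.Homotopic (genLoopPush f p) (genLoopPush f p') → GenLoop.Homotopic p p'))

/-- Two pointed spaces are weakly (homotopy) equivalent if they are connected by a zigzag of
weak homotopy equivalences. -/
def WeaklyEquivalent : PtdSpace → PtdSpace → Prop :=
  Relation.EqvGen fun X Y => ∃ f : C(X.carrier, Y.carrier), IsWeakHomotopyEquiv f

/-- `Map_*(A, X)`: the space of basepoint-preserving continuous maps `A → X` with the
compact-open topology, pointed at the constant map. -/
def mapSpace (A X : PtdSpace) : PtdSpace where
  carrier := { f : C(A.carrier, X.carrier) // f A.pt = X.pt }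
  pt := ⟨ContinuousMap.const A.carrier X.pt, rfl⟩

/-- Precomposition `Map_*(W, X) → Map_*(Z, X)` with a pointed map `f : Z → W`. -/
def precompMap {Z W : PtdSpace} (f : PtdMap Z W) (X : PtdSpace) :
    C((mapSpace W X).carrier, (mapSpace Z X).carrier) where
  toFun g := ⟨g.1.comp f.toFun, by rw [ContinuousMap.comp_apply, f.map_pt, g.2]⟩
  continuous_toFun := by
    apply Continuous.subtype_mk
    exact (ContinuousMap.continuous_precomp f.toFun).comp continuous_subtype_val

/-- A pointed space `X` is `f`-local if precomposition with `f` is a weak homotopy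
equivalence `Map_*(W, X) → Map_*(Z, X)`. -/
def IsLocal {Z W : PtdSpace} (f : PtdMap Z W) (X : PtdSpace) : Prop :=
  IsWeakHomotopyEquiv (precompMap f X)

/-- A pointed map `η : M → M'` is an `f`-equivalence if for every `f`-local space `T` the
induced map `Map_*(M', T) → Map_*(M, T)` is a weak homotopy equivalence. -/
def IsLocalEquiv {Z W M M' : PtdSpace} (f : PtdMap Z W) (η : PtdMap M M') : Prop :=
  ∀ T : PtdSpace, IsLocal f T → IsWeakHomotopyEquiv (precompMap η T)

/-- `η : M → M'` is an `f`-localization if it is an `f`-equivalence and `M'` is `f`-local. -/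
def IsLocalization {Z W M M' : PtdSpace} (f : PtdMap Z W) (η : PtdMap M M') : Prop :=
  IsLocalEquiv f η ∧ IsLocal f M'

/-- A pointed space `A` is L-good if for every pointed map `f` and every pointed space `X`
there exist a pointed space `Y` and an `f`-localization `Map_*(A,X) → M'` with `M'` weakly
homotopy equivalent to `Map_*(A, Y)`. -/
def IsLGood (A : PtdSpace) : Prop :=
  ∀ (Z W : PtdSpace) (f : PtdMap Z W) (X : PtdSpace),
    ∃ (Y M' : PtdSpace) (η : PtdMap (mapSpace A X) M'),
      IsLocalization f η ∧ WeaklyEquivalent M' (mapSpace A Y)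

/-- A pointed space `A` is strongly L-good if for every pointed map `f` and every pointed
space `X` there exist a pointed map `g`, a `g`-localization `X → X'`, and an
`f`-localization `Map_*(A,X) → M'` such that `M'` is weakly homotopy equivalent to
`Map_*(A, X')`. -/
def IsStronglyLGood (A : PtdSpace) : Prop :=
  ∀ (Z W : PtdSpace) (f : PtdMap Z W) (X : PtdSpace),
    ∃ (Z' W' : PtdSpace) (g : PtdMap Z' W') (X' : PtdSpace) (θ : PtdMap X X')
      (M' : PtdSpace) (η : PtdMap (mapSpace A X) M'),
      IsLocalization g θ ∧ IsLocalization f η ∧ WeaklyEquivalent M' (mapSpace A X')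

/-- The `q`-th singular homology of a topological space with integer coefficients, defined as
the `q`-th homology of the alternating face map complex of the free `ℤ`-module on the
singular simplicial set. -/
def singularHomology (q : ℕ) (X : Type) [TopologicalSpace X] : ModuleCat ℤ :=
  (((AlgebraicTopology.alternatingFaceMapComplex (ModuleCat ℤ)).obj
      (((CategoryTheory.SimplicialObject.whiskering _ _).obj (ModuleCat.free ℤ)).obj
        (TopCat.toSSet.obj (TopCat.of X)))).homology q)

section OldCWComplex

open CategoryTheory

universe u

namespace RelativeCWComplex

/-- The `n`-dimensional sphere (as in Mathlib of December 2024). -/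
def sphere (n : ℤ) : TopCat.{u} :=
  TopCat.of <| ULift <| Metric.sphere (0 : EuclideanSpace ℝ <| Fin <| (n + 1).toNat) 1

/-- The `n`-dimensional closed disk (as in Mathlib of December 2024). -/
def disk (n : ℤ) : TopCat.{u} :=
  TopCat.of <| ULift <| Metric.closedBall (0 : EuclideanSpace ℝ <| Fin <| n.toNat) 1

/-- The inclusion map from the `n`-sphere to the `(n + 1)`-disk. -/
def sphereInclusion (n : ℤ) : sphere.{u} n ⟶ disk.{u} (n + 1) :=
  TopCat.ofHom
    { toFun := fun p => ULift.up ⟨p.down.1, le_of_eq p.down.2⟩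
      continuous_toFun := continuous_uliftUp.comp
        (Continuous.subtype_mk (continuous_subtype_val.comp continuous_uliftDown) _) }

variable {S D : TopCat.{u}} (f : S ⟶ D)

/-- The inclusion of the disjoint unions of boundaries into the disjoint union of cells. -/
def generalizedSigmaSphereInclusion (cells : Type u) :
    (Limits.sigmaObj fun (_ : cells) => S) ⟶ (Limits.sigmaObj fun (_ : cells) => D) :=
  Limits.Sigma.map fun _ => f

/-- The attaching map for the disjoint union of all the boundaries. -/
def generalizedSigmaAttachMap (X : TopCat.{u}) (cells : Type u)
    (attachMaps : cells → (S ⟶ X)) : (Limits.sigmaObj fun (_ : cells) => S) ⟶ X :=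
  Limits.Sigma.desc attachMaps

/-- `X'` is obtained from `X` by attaching generalized cells given by `f : S ⟶ D`. -/
structure AttachGeneralizedCells (X X' : TopCat.{u}) where
  /-- The index type over the generalized cells -/
  cells : Type u
  /-- An attaching map for each generalized cell -/
  attachMaps : cells → (S ⟶ X)
  /-- `X'` is the pushout. -/
  iso_pushout : X' ≅ Limits.pushout (generalizedSigmaSphereInclusion f cells)
    (generalizedSigmaAttachMap X cells attachMaps)

/-- `X'` is obtained from `X` by attaching `(n + 1)`-cells. -/
def AttachCells (n : ℤ) := AttachGeneralizedCells (sphereInclusion.{u} n)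

end RelativeCWComplex

/-- A relative CW-complex (as in Mathlib of December 2024). -/
structure RelativeCWComplex where
  /-- The skeletons. -/
  sk : ℕ → TopCat.{u}
  /-- Each `sk (n + 1)` is obtained from `sk n` by attaching `n`-cells. -/
  attachCells (n : ℕ) : RelativeCWComplex.AttachCells ((n : ℤ) - 1) (sk n) (sk (n + 1))

/-- A CW-complex (as in Mathlib of December 2024). -/
structure CWComplex extends RelativeCWComplex.{u} where
  /-- `sk 0` is empty. -/
  isEmpty_sk_zero : IsEmpty (sk 0)

namespace RelativeCWComplex

/-- The inclusion map from `X` to `X'`. -/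
def AttachCells.inclusion {X X' : TopCat.{u}} {n : ℤ} (att : AttachCells n X X') : X ⟶ X' :=
  Limits.pushout.inr _ _ ≫ att.iso_pushout.inv

/-- The inclusion map from `sk n` to `sk (n + 1)`. -/
def skInclusion (X : RelativeCWComplex.{u}) (n : ℕ) : X.sk n ⟶ X.sk (n + 1) :=
  (X.attachCells n).inclusion

/-- The topology on a relative CW-complex. -/
def toTopCat (X : RelativeCWComplex.{u}) : TopCat.{u} :=
  Limits.colimit (Functor.ofSequence X.skInclusion)

end RelativeCWComplex

end OldCWComplex

/-- A space is a finite CW-complex if it is homeomorphic to (the realization of) a CW-complex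
with finitely many cells. -/
def IsFiniteCWComplex (A : Type) [TopologicalSpace A] : Prop :=
  ∃ X : CWComplex.{0},
    (∀ n, Finite (RelativeCWComplex.AttachGeneralizedCells.cells (X.attachCells n))) ∧
    (∃ N : ℕ, ∀ n, N ≤ n →
      IsEmpty (RelativeCWComplex.AttachGeneralizedCells.cells (X.attachCells n))) ∧
    Nonempty (A ≃ₜ X.toTopCat)


/-- The relation on `A × Z` collapsing the wedge `A ∨ Z ⊆ A × Z` to a point. -/
def smashRel (A Z : PtdSpace) : (A.carrier × Z.carrier) → (A.carrier × Z.carrier) → Prop :=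
  fun p q => (p.1 = A.pt ∨ p.2 = Z.pt) ∧ (q.1 = A.pt ∨ q.2 = Z.pt)

/-- The smash product `A ∧ Z`: the quotient of `A × Z` collapsing
`A × {z₀} ∪ {a₀} × Z` to a point. -/
def Smash (A Z : PtdSpace) : PtdSpace where
  carrier := Quot (smashRel A Z)
  pt := Quot.mk _ (A.pt, Z.pt)

theorem smashRel_lift {A Z W : PtdSpace} (f : PtdMap Z W) :
    ∀ a b : A.carrier × Z.carrier, smashRel A Z a b →
      Quot.mk (smashRel A W) (a.1, f.toFun a.2) = Quot.mk (smashRel A W) (b.1, f.toFun b.2) := by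
  rintro a b ⟨ha, hb⟩
  apply Quot.sound
  constructor
  · rcases ha with h | h
    · exact Or.inl h
    · exact Or.inr (by rw [h, f.map_pt])
  · rcases hb with h | h
    · exact Or.inl h
    · exact Or.inr (by rw [h, f.map_pt])

/-- The map `id_A ∧ f : A ∧ Z → A ∧ W` induced by a pointed map `f : Z → W`. -/
def smashMap (A : PtdSpace) {Z W : PtdSpace} (f : PtdMap Z W) :
    PtdMap (Smash A Z) (Smash A W) where
  toFun :=
    { toFun := Quot.lift (fun p => Quot.mk (smashRel A W) (p.1, f.toFun p.2)) (smashRel_lift f)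
      continuous_toFun := continuous_quot_lift _
        (continuous_quot_mk.comp
          (Continuous.prodMk continuous_fst (f.toFun.continuous.comp continuous_snd))) }
  map_pt := Quot.sound ⟨Or.inl rfl, Or.inl rfl⟩


section Aux

/-- A bijection between spaces that detects continuity of maps out of locally compact
spaces in both directions.  This is weaker than being a homeomorphism but suffices to
transfer weak homotopy equivalences. -/
def RelHomeo {S1 S2 : Type} [TopologicalSpace S1] [TopologicalSpace S2] (φ : S1 → S2) : Prop :=
  Function.Bijective φ ∧
    ∀ (T : Type) [TopologicalSpace T] [LocallyCompactSpace T] (c : T → S1),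
      Continuous c ↔ Continuous fun t => φ (c t)

lemma RelHomeo.exists_inv {S1 S2 : Type} [TopologicalSpace S1] [TopologicalSpace S2]
    {φ : S1 → S2} (h : RelHomeo φ) :
    ∃ ψ : S2 → S1, Function.LeftInverse ψ φ ∧ Function.RightInverse ψ φ ∧ RelHomeo ψ := by
  refine ⟨Function.surjInv h.1.2, Function.leftInverse_surjInv h.1,
    Function.rightInverse_surjInv h.1.2, ⟨?_, ?_⟩⟩
  · exact Function.bijective_iff_has_inverse.mpr ⟨φ, Function.rightInverse_surjInv h.1.2,
      Function.leftInverse_surjInv h.1⟩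
  · intro T _ _ c
    have hc : (fun t => φ (Function.surjInv h.1.2 (c t))) = c :=
      funext fun t => Function.rightInverse_surjInv h.1.2 (c t)
    constructor
    · intro h1
      exact (h.2 T fun t => Function.surjInv h.1.2 (c t)).mpr (by rw [hc]; exact h1)
    · intro h1
      have h2 := (h.2 T fun t => Function.surjInv h.1.2 (c t)).mp h1
      rwa [hc] at h2

lemma RelHomeo.joined_map {S1 S2 : Type} [TopologicalSpace S1] [TopologicalSpace S2]
    {φ : S1 → S2} (h : RelHomeo φ) {x y : S1} (hxy : Joined x y) : Joined (φ x) (φ y) := by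
  obtain ⟨p⟩ := hxy
  exact ⟨⟨⟨fun t => φ (p t), (h.2 unitInterval fun t => p t).mp p.continuous⟩,
    by simp, by simp⟩⟩

lemma RelHomeo.homotopicRel_map {S1 S2 : Type} [TopologicalSpace S1] [TopologicalSpace S2]
    {φ : S1 → S2} (h : RelHomeo φ) {N : Type} [TopologicalSpace N] [LocallyCompactSpace N]
    {p q : C(N, S1)} {p' q' : C(N, S2)} (hp : ∀ y, φ (p y) = p' y) (hq : ∀ y, φ (q y) = q' y)
    {S : Set N} (hpq : p.HomotopicRel q S) : p'.HomotopicRel q' S := by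
  obtain ⟨H⟩ := hpq
  refine ⟨⟨⟨⟨fun tp => φ (H tp), ?_⟩, ?_, ?_⟩, ?_⟩⟩
  · exact (h.2 (unitInterval × N) fun tp => H tp).mp H.continuous
  · intro y
    show φ (H (0, y)) = p' y
    rw [H.apply_zero, hp]
  · intro y
    show φ (H (1, y)) = q' y
    rw [H.apply_one, hq]
  · intro t y hy
    show φ (H (t, y)) = p' y
    rw [H.eq_fst t hy, hp]

lemma homotopic_of_eq {X : Type} [TopologicalSpace X] {N : Type} {x x' : X}
    {p q : GenLoop N X x} {p' q' : GenLoop N X x'} (h : GenLoop.Homotopic p q)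
    (hp : p.1 = p'.1) (hq : q.1 = q'.1) : GenLoop.Homotopic p' q' := by
  have h2 : ContinuousMap.HomotopicRel p.1 q.1 (Cube.boundary N) := h
  rw [hp, hq] at h2
  exact h2

lemma transfer_isWeakHomotopyEquiv {T1 S1 T2 S2 : Type}
    [TopologicalSpace T1] [TopologicalSpace S1] [TopologicalSpace T2] [TopologicalSpace S2]
    {F1 : C(T1, S1)} {F2 : C(T2, S2)} {φS : S1 → S2} {φT : T1 → T2}
    (hS : RelHomeo φS) (hT : RelHomeo φT) (hsq : ∀ t, φS (F1 t) = F2 (φT t))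
    (h : IsWeakHomotopyEquiv F1) : IsWeakHomotopyEquiv F2 := by
  obtain ⟨ψS, hψSl, hψSr, hψS⟩ := hS.exists_inv
  obtain ⟨ψT, hψTl, hψTr, hψT⟩ := hT.exists_inv
  have hSl : ∀ a, ψS (φS a) = a := hψSl
  have hSr : ∀ a, φS (ψS a) = a := hψSr
  have hTl : ∀ a, ψT (φT a) = a := hψTl
  have hTr : ∀ a, φT (ψT a) = a := hψTr
  obtain ⟨h0s, h0i, hn⟩ := h
  refine ⟨?_, ?_, ?_⟩
  · intro y
    obtain ⟨x, hx⟩ := h0s (ψS y)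
    refine ⟨φT x, ?_⟩
    have h1 := hS.joined_map hx
    rw [hSr y, hsq x] at h1
    exact h1
  · intro t t' hj
    obtain ⟨u, rfl⟩ := hT.1.2 t
    obtain ⟨u', rfl⟩ := hT.1.2 t'
    have hj1 : Joined (φS (F1 u)) (φS (F1 u')) := by rwa [hsq, hsq]
    have hj2 := hψS.joined_map hj1
    rw [hSl, hSl] at hj2
    exact hT.joined_map (h0i u u' hj2)
  · intro n t₂
    obtain ⟨u, rfl⟩ := hT.1.2 t₂
    constructor
    · intro q
      have hq2 : ∀ y ∈ Cube.boundary (Fin n), ψS (q.1 y) = F1 u := by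
        intro y hy
        rw [q.2 y hy, ← hsq u, hSl]
      obtain ⟨ℓ, hℓ⟩ := (hn n u).1
        ⟨⟨fun y => ψS (q.1 y),
          (hψS.2 (Fin n → unitInterval) fun y => q.1 y).mp q.1.continuous⟩, hq2⟩
      refine ⟨⟨⟨fun y => φT (ℓ.1 y),
        (hT.2 (Fin n → unitInterval) fun y => ℓ.1 y).mp ℓ.1.continuous⟩, fun y hy => by
          show φT (ℓ.1 y) = φT u
          rw [ℓ.2 y hy]⟩, ?_⟩
      show ContinuousMap.HomotopicRel _ q.1 (Cube.boundary (Fin n))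
      exact hS.homotopicRel_map (fun y => hsq (ℓ.1 y)) (fun y => hSr (q.1 y)) hℓ
    · intro k k' hkk
      have hpb : ∀ (m : GenLoop (Fin n) T2 (φT u)), ∀ y ∈ Cube.boundary (Fin n),
          ψT (m.1 y) = u := by
        intro m y hy
        rw [m.2 y hy, hTl]
      have hside : ∀ (m : GenLoop (Fin n) T2 (φT u)) (y : Fin n → unitInterval),
          ψS (F2 (m.1 y)) = F1 (ψT (m.1 y)) := by
        intro m y
        rw [← hSl (F1 (ψT (m.1 y))), hsq, hTr]
      set kb : GenLoop (Fin n) T1 u :=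
        ⟨⟨fun y => ψT (k.1 y),
          (hψT.2 (Fin n → unitInterval) fun y => k.1 y).mp k.1.continuous⟩, hpb k⟩ with hkb
      set kb' : GenLoop (Fin n) T1 u :=
        ⟨⟨fun y => ψT (k'.1 y),
          (hψT.2 (Fin n → unitInterval) fun y => k'.1 y).mp k'.1.continuous⟩, hpb k'⟩ with hkb'
      have h1 : GenLoop.Homotopic (genLoopPush F1 kb) (genLoopPush F1 kb') := by
        show ContinuousMap.HomotopicRel _ _ (Cube.boundary (Fin n))
        exact hψS.homotopicRel_map (hside k) (hside k') hkk
      have h2 := (hn n u).2 kb kb' h1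
      show ContinuousMap.HomotopicRel k.1 k'.1 (Cube.boundary (Fin n))
      exact hT.homotopicRel_map (p' := k.1) (q' := k'.1)
        (fun y => hTr (k.1 y)) (fun y => hTr (k'.1 y)) h2

/-- The quotient map `A × Z → A ∧ Z` as a continuous map. -/
def smashMk (A Z : PtdSpace) : C(A.carrier × Z.carrier, (Smash A Z).carrier) :=
  ⟨Quot.mk _, continuous_quot_mk⟩

/-- The underlying curried map of the smash-product adjunction. -/
def smashCurryCM (A Z X : PtdSpace) (g : (mapSpace (Smash A Z) X).carrier) :
    C(Z.carrier, C(A.carrier, X.carrier)) :=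
  ContinuousMap.curry ((g.1.comp (smashMk A Z)).comp
    (⟨Prod.swap, continuous_swap⟩ : C(Z.carrier × A.carrier, A.carrier × Z.carrier)))

lemma smashCurryCM_pt (A Z X : PtdSpace) (g : (mapSpace (Smash A Z) X).carrier)
    (z : Z.carrier) : smashCurryCM A Z X g z A.pt = X.pt := by
  show g.1 (Quot.mk (smashRel A Z) (A.pt, z)) = X.pt
  rw [show Quot.mk (smashRel A Z) (A.pt, z) = Quot.mk (smashRel A Z) (A.pt, Z.pt) from
    Quot.sound ⟨Or.inl rfl, Or.inl rfl⟩]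
  exact g.2

/-- The forward map of the smash-product adjunction
`Map_*(A ∧ Z, X) → Map_*(Z, Map_*(A, X))`. -/
def smashCurry (A Z X : PtdSpace) (g : (mapSpace (Smash A Z) X).carrier) :
    (mapSpace Z (mapSpace A X)).carrier :=
  ⟨⟨fun z => ⟨smashCurryCM A Z X g z, smashCurryCM_pt A Z X g z⟩,
    Continuous.subtype_mk (smashCurryCM A Z X g).continuous _⟩,
   Subtype.ext (ContinuousMap.ext fun a => by
     show g.1 (Quot.mk (smashRel A Z) (a, Z.pt)) = X.pt
     rw [show Quot.mk (smashRel A Z) (a, Z.pt) = Quot.mk (smashRel A Z) (A.pt, Z.pt) from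
       Quot.sound ⟨Or.inr rfl, Or.inl rfl⟩]
     exact g.2)⟩

/-- The inverse map of the smash-product adjunction. -/
def smashUncurry (A Z X : PtdSpace) [LocallyCompactSpace A.carrier]
    (h : (mapSpace Z (mapSpace A X)).carrier) : (mapSpace (Smash A Z) X).carrier :=
  have key : ∀ p : A.carrier × Z.carrier, (p.1 = A.pt ∨ p.2 = Z.pt) →
      (h.1 p.2).1 p.1 = X.pt := by
    rintro ⟨a, z⟩ (rfl | rfl)
    · exact (h.1 z).2
    · show (h.1 Z.pt).1 a = X.pt
      rw [h.2]
      rfl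
  ⟨⟨Quot.lift (fun p => (h.1 p.2).1 p.1)
      (fun p q hpq => by
        show (h.1 p.2).1 p.1 = (h.1 q.2).1 q.1
        rw [key p hpq.1, key q hpq.2]),
    continuous_quot_lift _ (by
      have h1 : Continuous fun z : Z.carrier =>
          ((h.1 z).1 : C(A.carrier, X.carrier)) :=
        continuous_subtype_val.comp h.1.continuous
      exact (ContinuousMap.uncurry
        (⟨_, h1⟩ : C(Z.carrier, C(A.carrier, X.carrier)))).continuous.comp continuous_swap)⟩,
   key (A.pt, Z.pt) (Or.inl rfl)⟩

lemma smashUncurry_smashCurry (A Z X : PtdSpace) [LocallyCompactSpace A.carrier]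
    (g : (mapSpace (Smash A Z) X).carrier) :
    smashUncurry A Z X (smashCurry A Z X g) = g :=
  Subtype.ext (ContinuousMap.ext fun s => Quot.inductionOn s fun _ => rfl)

lemma smashCurry_smashUncurry (A Z X : PtdSpace) [LocallyCompactSpace A.carrier]
    (h : (mapSpace Z (mapSpace A X)).carrier) :
    smashCurry A Z X (smashUncurry A Z X h) = h :=
  Subtype.ext (ContinuousMap.ext fun _ => Subtype.ext (ContinuousMap.ext fun _ => rfl))

lemma relHomeo_smashCurry (A Z X : PtdSpace) [LocallyCompactSpace A.carrier]
    [LocallyCompactSpace Z.carrier] : RelHomeo (smashCurry A Z X) := by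
  constructor
  · exact Function.bijective_iff_has_inverse.mpr
      ⟨smashUncurry A Z X, smashUncurry_smashCurry A Z X, smashCurry_smashUncurry A Z X⟩
  · intro T _ _ c
    constructor
    · intro hc
      have hkey : Continuous fun q : (T × Z.carrier) × A.carrier =>
          (c q.1.1).1 (Quot.mk (smashRel A Z) (q.2, q.1.2)) := by
        have h1 : Continuous fun q : (T × Z.carrier) × A.carrier =>
            (((c q.1.1).1.comp (smashMk A Z) : C(A.carrier × Z.carrier, X.carrier)),
              (q.2, q.1.2)) := by
          refine Continuous.prodMk ?_
            (continuous_snd.prodMk (continuous_snd.comp continuous_fst))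
          exact (ContinuousMap.continuous_precomp (smashMk A Z)).comp
            (continuous_subtype_val.comp (hc.comp (continuous_fst.comp continuous_fst)))
        exact ContinuousEval.continuous_eval.comp h1
      apply Continuous.subtype_mk
      refine ContinuousMap.continuous_of_continuous_uncurry _ ?_
      apply Continuous.subtype_mk
      refine ContinuousMap.continuous_of_continuous_uncurry _ ?_
      exact hkey
    · intro hc
      apply continuous_induced_rng.mpr
      refine ContinuousMap.continuous_of_continuous_uncurry _ ?_
      refine (isQuotientMap_quot_mk (r := smashRel A Z)).continuous_lift_prod_right ?_
      have h2 : Continuous fun p : T × (A.carrier × Z.carrier) =>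
          ((smashCurry A Z X (c p.1)).1 p.2.2) :=
        ContinuousEval.continuous_eval.comp
          ((continuous_subtype_val.comp (hc.comp continuous_fst)).prodMk
            (continuous_snd.comp continuous_snd))
      have h3 : Continuous fun p : T × (A.carrier × Z.carrier) =>
          (((smashCurry A Z X (c p.1)).1 p.2.2).1 p.2.1) :=
        ContinuousEval.continuous_eval.comp
          ((continuous_subtype_val.comp h2).prodMk (continuous_fst.comp continuous_snd))
      exact h3

end Aux

/-- For `A`, `Z`, `W` locally compact Hausdorff pointed spaces and a pointed map
`f : Z → W`, a pointed space `X` is `(id_A ∧ f)`-local if and only if `Map_*(A, X)` is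
`f`-local. -/
theorem isLocal_smash_iff_mapSpace_isLocal (A Z W : PtdSpace)
    [LocallyCompactSpace A.carrier] [T2Space A.carrier]
    [LocallyCompactSpace Z.carrier] [T2Space Z.carrier]
    [LocallyCompactSpace W.carrier] [T2Space W.carrier]
    (f : PtdMap Z W) (X : PtdSpace) :
    IsLocal (smashMap A f) X ↔ IsLocal f (mapSpace A X) := by
  have hZ := relHomeo_smashCurry A Z X
  have hW := relHomeo_smashCurry A W X
  obtain ⟨ψZ, hψZl, hψZr, hψZ⟩ := hZ.exists_inv
  obtain ⟨ψW, hψWl, hψWr, hψW⟩ := hW.exists_inv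
  have hsq : ∀ g, smashCurry A Z X ((precompMap (smashMap A f) X) g)
      = (precompMap f (mapSpace A X)) (smashCurry A W X g) := fun g => rfl
  constructor
  · intro h
    exact transfer_isWeakHomotopyEquiv hZ hW hsq h
  · intro h
    refine transfer_isWeakHomotopyEquiv hψZ hψW ?_ h
    intro hh
    have h2 := hsq (ψW hh)
    rw [hψWr] at h2
    rw [← h2, hψZl]

end DetectMS
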